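/- The identity Σ_{i=1}^{n-1} Σ_{j=1}^{i} f_{j-1} f_j = f_{n-1} f_n − ⌊(n+1)/2⌋ holds for all n ≥ 1, where f_k are the Fibonacci numbers with f_0 = f_1 = 1. -/
import Mathlib


/-- The Fibonacci numbers with `f 0 = f 1 = 1` and `f n = f (n-1) + f (n-2)`. -/
def fib1 (k : ℕ) : ℕ := Nat.fib (k + 1)

lemma fib1_rec (k : ℕ) : fib1 (k + 2) = fib1 k + fib1 (k + 1) := by
  simp only [fib1]
  rw [show k+2+1 = (k+1)+2 by ring, Nat.fib_add_two]

lemma cassini1 (i : ℕ) :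
    fib1 (i+1) ^ 2 + (i+1) % 2 = fib1 i * fib1 (i+2) + (i+2) % 2 := by
  induction i with
  | zero => decide
  | succ i ih =>
    rw [fib1_rec i, show (i+2) % 2 = i % 2 by omega] at ih
    rw [show i+1+1 = i+2 by ring, show i+1+2 = i+3 by ring,
        show (i+3) = (i+1)+2 by ring, fib1_rec (i+1), fib1_rec i,
        show (i+2) % 2 = i % 2 by omega, show ((i+1)+2) % 2 = (i+1) % 2 by omega]
    zify at ih ⊢
    nlinarith [ih]

lemma fib1_inner_sum (i : ℕ) :
    (∑ j ∈ Finset.Icc 1 i, fib1 (j - 1) * fib1 j) + (i+1) % 2 = fib1 i ^ 2 := by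
  induction i with
  | zero => simp [fib1]
  | succ i ih =>
    rw [Finset.sum_Icc_succ_top (show (1:ℕ) ≤ i + 1 by omega), Nat.add_sub_cancel]
    have hc := cassini1 i
    rw [fib1_rec i] at hc
    rw [show i+1+1 = i+2 by ring]
    zify at ih hc ⊢
    nlinarith [ih, hc]

lemma fib1_outer_sum (m : ℕ) :
    (∑ i ∈ Finset.Icc 1 m, ∑ j ∈ Finset.Icc 1 i, fib1 (j - 1) * fib1 j) + (m+2)/2
      = fib1 m * fib1 (m+1) := by
  induction m with
  | zero => simp [fib1]
  | succ m ih =>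
    rw [Finset.sum_Icc_succ_top (show (1:ℕ) ≤ m + 1 by omega)]
    have hi := fib1_inner_sum (m+1)
    rw [show m+1+1 = m+2 by ring] at hi
    rw [show m+1+1 = m+2 by ring, fib1_rec m,
        show (m+1+2)/2 = (m+2)/2 + (m+2) % 2 by omega]
    zify at ih hi ⊢
    nlinarith [ih, hi]

/-- For all `n ≥ 1`,
`Σ_{i=1}^{n-1} Σ_{j=1}^{i} f_{j-1} f_j = f_{n-1} f_n − ⌊(n+1)/2⌋`, where `f` is the
Fibonacci sequence with `f_0 = f_1 = 1`. -/
theorem fib_sum_identity {n : ℕ} (hn : 1 ≤ n) :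
    (∑ i ∈ Finset.Icc 1 (n - 1), ∑ j ∈ Finset.Icc 1 i, fib1 (j - 1) * fib1 j) =
      fib1 (n - 1) * fib1 n - (n + 1) / 2 := by
  have h := fib1_outer_sum (n - 1)
  rw [show n - 1 + 1 = n by omega, show n - 1 + 2 = n + 1 by omega] at h
  omega
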